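/- For every binary tree A on j ≥ 4 nodes, the proportion of permutations of {1,...,j} whose Cartesian tree equals A satisfies p(A)/j! ≤ 4/(j(j-2)(j-3)). -/

import Mathlib

/-- Binary tree shapes (Cartesian trees are determined by their shape). -/
inductive BTree : Type
  | nil : BTree
  | node : BTree → BTree → BTree
deriving DecidableEq

namespace BTree

/-- Number of nodes. -/
def size : BTree → ℕ
  | nil => 0
  | node l r => size l + size r + 1

/-- Length of the leftmost path. -/
def LMP : BTree → ℕ
  | nil => 0
  | node l _ => LMP l + 1

/-- Length of the rightmost path. -/
def RMP : BTree → ℕ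
  | nil => 0
  | node _ r => RMP r + 1

end BTree

/-- Minimum value of a list (0 for the empty list). -/
def listMin : List ℤ → ℤ
  | [] => 0
  | a :: t => t.foldl min a

/-- Index (0-based) of the minimum of a list. -/
def minIdx (l : List ℤ) : ℕ := l.idxOf (listMin l)

/-- Cartesian tree of a list, with fuel for termination. -/
def ctreeAux : ℕ → List ℤ → BTree
  | 0, _ => .nil
  | _ + 1, [] => .nil
  | n + 1, a :: t =>
      let g := minIdx (a :: t)
      .node (ctreeAux n ((a :: t).take g)) (ctreeAux n ((a :: t).drop (g + 1)))

/-- Cartesian tree of a list: the root is the position of the minimum,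
its subtrees are the Cartesian trees of the prefix and suffix around it. -/
def ctreeL (l : List ℤ) : BTree := ctreeAux l.length l

/-- The factor x[a..b] (1-based positions) of a sequence, as a list. -/
def seqList (x : ℕ → ℤ) (a b : ℕ) : List ℤ :=
  (List.range (b + 1 - a)).map (fun k => x (a + k))

/-- Cartesian tree of the sequence x[1..m]. -/
def ctreeOf (m : ℕ) (x : ℕ → ℤ) : BTree := ctreeL (seqList x 1 m)

/-- Positions j < h (1-based) with x[j] < x[h]. -/
def PDset (x : ℕ → ℤ) (h : ℕ) : Finset ℕ :=
  (Finset.Ico 1 h).filter (fun j => x j < x h)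

/-- Parent-distance table: PD_x[h] = h - max{j < h : x[j] < x[h]}, 0 if no such j. -/
def PD (x : ℕ → ℤ) (h : ℕ) : ℕ :=
  if hs : (PDset x h).Nonempty then h - (PDset x h).max' hs else 0

/-- Positions h < j ≤ m with x[j] < x[h]. -/
def RPDset (m : ℕ) (x : ℕ → ℤ) (h : ℕ) : Finset ℕ :=
  (Finset.Ioc h m).filter (fun j => x j < x h)

/-- Reverse parent-distance table: RPD_x[h] = min{j > h : x[j] < x[h]} - h, 0 if no such j. -/
def RPD (m : ℕ) (x : ℕ → ℤ) (h : ℕ) : ℕ :=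
  if hs : (RPDset m x h).Nonempty then (RPDset m x h).min' hs - h else 0

/-- Referent of h: the smallest position j > h with x[j] < x[h], or -1 if none. -/
def refD (m : ℕ) (x : ℕ → ℤ) (h : ℕ) : ℤ :=
  if hs : (RPDset m x h).Nonempty then ((RPDset m x h).min' hs : ℤ) else -1

/-- Skipped-number table: SN_x[h] is the number of nodes on the rightmost path of the
left subtree of node h in C(x), i.e. the number of positions whose referent is h. -/
def SN (m : ℕ) (x : ℕ → ℤ) (h : ℕ) : ℕ :=
  ((Finset.Ico 1 h).filter (fun j => refD m x j = (h : ℤ))).card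

/-- The swap τ(x,i): exchange the entries at positions i and i+1. -/
def swapAt (x : ℕ → ℤ) (i : ℕ) : ℕ → ℤ :=
  fun j => if j = i then x (i + 1) else if j = i + 1 then x i else x j

/-- ng(T,i): the Cartesian trees obtained from a sequence realizing T by one swap
at position i (valid positions are 1 ≤ i ≤ m-1). -/
def ngi (m : ℕ) (T : BTree) (i : ℕ) : Set BTree :=
  { S | 1 ≤ i ∧ i + 1 ≤ m ∧ ∃ x : ℕ → ℤ, Set.InjOn x (Set.Icc 1 m) ∧
        ctreeOf m x = T ∧ S = ctreeOf m (swapAt x i) }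

/-- ng(T): the swap neighbourhood of T. -/
def ng (m : ℕ) (T : BTree) : Set BTree := ⋃ i, ngi m T i

/-- Number of permutations of {1,...,n} whose Cartesian tree is A. -/
noncomputable def permCount (n : ℕ) (A : BTree) : ℕ :=
  Set.ncard { σ : Equiv.Perm (Fin n) |
    ctreeL (List.ofFn (fun k : Fin n => ((σ k : ℕ) : ℤ) + 1)) = A }

/-- Product over all nodes t of A of the size of the subtree rooted at t. -/
def hookProd : BTree → ℕ
  | .nil => 1
  | .node l r => (BTree.node l r).size * hookProd l * hookProd r


-- listMin basics
lemma foldl_min_le (t : List ℤ) (a : ℤ) : t.foldl min a ≤ a := by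
  induction t generalizing a with
  | nil => simp
  | cons b t ih => simpa using le_trans (ih (min a b)) (min_le_left a b)

lemma foldl_min_mem (t : List ℤ) (a : ℤ) : t.foldl min a ∈ a :: t := by
  induction t generalizing a with
  | nil => simp
  | cons b t ih =>
    have h := ih (min a b)
    rcases List.mem_cons.1 h with h | h
    · rw [List.foldl_cons, h]
      rcases min_cases a b with ⟨h2, _⟩ | ⟨h2, _⟩ <;> simp [h2]
    · rw [List.foldl_cons]
      simp [h]

lemma foldl_min_le_mem (t : List ℤ) (a : ℤ) (x : ℤ) (hx : x ∈ t) : t.foldl min a ≤ x := by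
  induction t generalizing a with
  | nil => simp at hx
  | cons b t ih =>
    rcases List.mem_cons.1 hx with rfl | hx
    · exact le_trans (foldl_min_le t (min a x)) (min_le_right a x)
    · exact ih (min a b) hx

lemma listMin_mem {l : List ℤ} (h : l ≠ []) : listMin l ∈ l := by
  cases l with
  | nil => simp at h
  | cons a t => exact foldl_min_mem t a

lemma listMin_le {l : List ℤ} (x : ℤ) (hx : x ∈ l) : listMin l ≤ x := by
  cases l with
  | nil => simp at hx
  | cons a t =>
    rcases List.mem_cons.1 hx with rfl | hx
    · exact foldl_min_le t x
    · exact foldl_min_le_mem t a x hx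

lemma minIdx_lt {l : List ℤ} (h : l ≠ []) : minIdx l < l.length :=
  List.idxOf_lt_length_iff.2 (listMin_mem h)

lemma get_minIdx {l : List ℤ} (h : l ≠ []) : l.get ⟨minIdx l, minIdx_lt h⟩ = listMin l :=
  List.idxOf_get _

lemma get_ne_of_lt_indexOf {l : List ℤ} {a : ℤ} {i : ℕ} (h : i < l.length)
    (hi : i < l.idxOf a) : l.get ⟨i, h⟩ ≠ a := by
  induction l generalizing i with
  | nil => simp at h
  | cons b t ih =>
    by_cases hb : b = a
    · simp [List.idxOf_cons_eq _ hb] at hi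
    · cases i with
      | zero => simpa using hb
      | succ i =>
        rw [List.idxOf_cons_ne _ hb] at hi
        exact ih (by simpa using h) (Nat.lt_of_succ_lt_succ hi)

lemma get_minIdx_lt {l : List ℤ} {i : ℕ} (h : i < l.length) (hi : i < minIdx l) :
    l.get ⟨minIdx l, minIdx_lt (by rintro rfl; simp at h)⟩ < l.get ⟨i, h⟩ := by
  have hne : l ≠ [] := by rintro rfl; simp at h
  rw [get_minIdx hne]
  exact lt_of_le_of_ne (listMin_le _ (l.get_mem _)) (Ne.symm (get_ne_of_lt_indexOf h hi))

-- fuel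

lemma ctreeAux_fuel : ∀ n (l : List ℤ), l.length ≤ n → ctreeAux n l = ctreeL l := by
  intro n
  induction n using Nat.strong_induction_on with
  | _ n ih =>
    intro l hl
    cases n with
    | zero =>
      have : l = [] := List.length_eq_zero_iff.mp (Nat.le_zero.mp hl)
      subst this; rfl
    | succ n =>
      cases l with
      | nil => rfl
      | cons a t =>
        have hg := minIdx_lt (l := a :: t) (by simp)
        simp only [List.length_cons] at hg hl
        rw [ctreeL, List.length_cons, ctreeAux, ctreeAux]
        have h1 : ((a :: t).take (minIdx (a :: t))).length ≤ n := by
          simp only [List.length_take, List.length_cons]; omega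
        have h2 : ((a :: t).drop (minIdx (a :: t) + 1)).length ≤ n := by
          simp only [List.length_drop, List.length_cons]; omega
        have h1t : ((a :: t).take (minIdx (a :: t))).length ≤ t.length := by
          simp only [List.length_take, List.length_cons]; omega
        have h2t : ((a :: t).drop (minIdx (a :: t) + 1)).length ≤ t.length := by
          simp only [List.length_drop, List.length_cons]; omega
        rw [ih n (by omega) _ h1, ih n (by omega) _ h2,
            ih t.length (by omega) _ h1t, ih t.length (by omega) _ h2t]

lemma ctreeL_cons (a : ℤ) (t : List ℤ) :
    ctreeL (a :: t) = .node (ctreeL ((a :: t).take (minIdx (a :: t))))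
      (ctreeL ((a :: t).drop (minIdx (a :: t) + 1))) := by
  rw [ctreeL, List.length_cons, ctreeAux]
  have hg := minIdx_lt (l := a :: t) (by simp)
  simp only [List.length_cons] at hg
  rw [ctreeAux_fuel _ _ (by simp only [List.length_take, List.length_cons]; omega),
      ctreeAux_fuel _ _ (by simp only [List.length_drop, List.length_cons]; omega)]

lemma ctreeL_size (l : List ℤ) : (ctreeL l).size = l.length := by
  suffices H : ∀ n (l : List ℤ), l.length ≤ n → (ctreeL l).size = l.length from H _ l le_rfl
  intro n
  induction n with
  | zero =>
    intro l hl
    have : l = [] := List.length_eq_zero_iff.mp (Nat.le_zero.mp hl)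
    subst this; rfl
  | succ n ih =>
    intro l hl
    cases l with
    | nil => rfl
    | cons a t =>
      have hg := minIdx_lt (l := a :: t) (by simp)
      simp only [List.length_cons] at hg hl
      rw [ctreeL_cons, BTree.size,
          ih _ (by simp only [List.length_take, List.length_cons]; omega),
          ih _ (by simp only [List.length_drop, List.length_cons]; omega)]
      simp only [List.length_take, List.length_drop, List.length_cons]
      omega

lemma minIdx_min {l : List ℤ} (h : l ≠ []) {j : ℕ} (hj : j < l.length) :
    l.get ⟨minIdx l, minIdx_lt h⟩ ≤ l.get ⟨j, hj⟩ := by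
  rw [get_minIdx h]; exact listMin_le _ (l.get_mem _)

lemma minIdx_unique {l : List ℤ} {g : ℕ} (hg : g < l.length)
    (hmin : ∀ j (hj : j < l.length), l.get ⟨g, hg⟩ ≤ l.get ⟨j, hj⟩)
    (hfirst : ∀ i (hi : i < g), l.get ⟨g, hg⟩ < l.get ⟨i, lt_trans hi hg⟩) :
    minIdx l = g := by
  have hne : l ≠ [] := by rintro rfl; simp at hg
  rcases lt_trichotomy (minIdx l) g with h | h | h
  · exact absurd (hfirst _ h) (not_lt.2 (minIdx_min hne _))
  · exact h
  · exact absurd (get_minIdx_lt hg h) (not_lt.2 (hmin _ _))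

lemma ctreeL_ne {l : List ℤ} (h : l ≠ []) :
    ctreeL l = .node (ctreeL (l.take (minIdx l))) (ctreeL (l.drop (minIdx l + 1))) := by
  cases l with
  | nil => simp at h
  | cons a t => exact ctreeL_cons a t

lemma ctreeL_congr : ∀ (l₁ l₂ : List ℤ) (hlen : l₁.length = l₂.length),
    (∀ i j (h1 : i < l₁.length) (h2 : j < l₁.length),
      l₁.get ⟨i, h1⟩ < l₁.get ⟨j, h2⟩ ↔
      l₂.get ⟨i, hlen ▸ h1⟩ < l₂.get ⟨j, hlen ▸ h2⟩) →
    ctreeL l₁ = ctreeL l₂ := by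
  suffices H : ∀ n (l₁ l₂ : List ℤ) (_ : l₁.length ≤ n) (hlen : l₁.length = l₂.length),
      (∀ i j (h1 : i < l₁.length) (h2 : j < l₁.length),
        l₁.get ⟨i, h1⟩ < l₁.get ⟨j, h2⟩ ↔
        l₂.get ⟨i, hlen ▸ h1⟩ < l₂.get ⟨j, hlen ▸ h2⟩) →
      ctreeL l₁ = ctreeL l₂ by
    intro l₁ l₂ hlen h; exact H l₁.length l₁ l₂ le_rfl hlen h
  intro n
  induction n with
  | zero =>
    intro l₁ l₂ hn hlen _
    have h1 : l₁ = [] := List.length_eq_zero_iff.mp (Nat.le_zero.mp hn)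
    have h2 : l₂ = [] := List.length_eq_zero_iff.mp (by omega)
    rw [h1, h2]
  | succ n ih =>
    intro l₁ l₂ hn hlen hord
    by_cases hne1 : l₁ = []
    · have h2 : l₂ = [] := List.length_eq_zero_iff.mp (by rw [← hlen, hne1]; rfl)
      rw [hne1, h2]
    have hne2 : l₂ ≠ [] := by
      rw [← List.length_pos_iff_ne_nil, ← hlen, List.length_pos_iff_ne_nil]; exact hne1
    have hg : minIdx l₁ < l₁.length := minIdx_lt hne1
    have hg2 : minIdx l₁ < l₂.length := hlen ▸ hg
    have hgg : minIdx l₂ = minIdx l₁ := by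
      apply minIdx_unique hg2
      · intro j hj
        refine le_of_not_gt (fun hc => ?_)
        have : l₁.get ⟨j, hlen ▸ hj⟩ < l₁.get ⟨minIdx l₁, hg⟩ :=
          (hord j (minIdx l₁) (hlen ▸ hj) hg).mpr hc
        exact absurd this (not_lt.2 (minIdx_min hne1 _))
      · intro i hi
        exact (hord (minIdx l₁) i hg (lt_trans hi hg)).mp (get_minIdx_lt _ hi)
    rw [ctreeL_ne hne1, ctreeL_ne hne2, hgg]
    have htl : (l₁.take (minIdx l₁)).length = (l₂.take (minIdx l₁)).length := by
      simp only [List.length_take]; omega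
    have hdl : (l₁.drop (minIdx l₁ + 1)).length = (l₂.drop (minIdx l₁ + 1)).length := by
      simp only [List.length_drop]; omega
    congr 1
    · apply ih _ _ (by simp only [List.length_take]; omega) htl
      intro i j h1 h2
      simp only [List.length_take] at h1 h2
      simp only [List.get_eq_getElem, List.getElem_take]
      exact hord i j (by omega) (by omega)
    · apply ih _ _ (by simp only [List.length_drop]; omega) hdl
      intro i j h1 h2
      simp only [List.length_drop] at h1 h2
      simp only [List.get_eq_getElem, List.getElem_drop]
      exact hord _ _ (by omega) (by omega)

-- counting

def xlist (n : ℕ) (σ : Equiv.Perm (Fin n)) : List ℤ :=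
  List.ofFn (fun k : Fin n => ((σ k : ℕ) : ℤ) + 1)

@[simp] lemma xlist_length {n : ℕ} (σ : Equiv.Perm (Fin n)) : (xlist n σ).length = n :=
  List.length_ofFn

lemma xlist_get {n : ℕ} (σ : Equiv.Perm (Fin n)) {k : ℕ} (h : k < n) :
    (xlist n σ).get ⟨k, by simp [h]⟩ = ((σ ⟨k, h⟩ : ℕ) : ℤ) + 1 := by
  simp [xlist]

lemma sizes_eq {n : ℕ} {σ : Equiv.Perm (Fin n)} {L R : BTree}
    (hσ : ctreeL (xlist n σ) = .node L R) : n = L.size + R.size + 1 := by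
  have h := ctreeL_size (xlist n σ)
  rw [hσ] at h
  simp only [BTree.size, xlist_length] at h
  omega

lemma minIdx_xlist {n : ℕ} {σ : Equiv.Perm (Fin n)} {L R : BTree}
    (hσ : ctreeL (xlist n σ) = .node L R) : minIdx (xlist n σ) = L.size := by
  have hn := sizes_eq hσ
  have hne : xlist n σ ≠ [] := by
    intro h; rw [← List.length_eq_zero_iff, xlist_length] at h; omega
  have hg := minIdx_lt hne
  rw [ctreeL_ne hne] at hσ
  rw [BTree.node.injEq] at hσ
  have := ctreeL_size ((xlist n σ).take (minIdx (xlist n σ)))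
  rw [hσ.1] at this
  rw [this]
  simp only [List.length_take, xlist_length] at *
  omega

lemma listMin_xlist {n : ℕ} (hn : 0 < n) (σ : Equiv.Perm (Fin n)) :
    listMin (xlist n σ) = 1 := by
  have hne : xlist n σ ≠ [] := by
    intro h; rw [← List.length_eq_zero_iff, xlist_length] at h; omega
  have h1 : (1 : ℤ) ∈ xlist n σ := by
    have hlt : ((σ.symm ⟨0, hn⟩ : Fin n) : ℕ) < n := (σ.symm ⟨0, hn⟩).isLt
    have hg : (xlist n σ).get ⟨(σ.symm ⟨0, hn⟩ : Fin n), by simp [hlt]⟩ = 1 := by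
      rw [xlist_get σ hlt]
      simp
    rw [← hg]
    exact (xlist n σ).get_mem _
  have hge : ∀ x ∈ xlist n σ, (1:ℤ) ≤ x := by
    intro x hx
    rw [xlist, List.mem_ofFn] at hx
    obtain ⟨k, rfl⟩ := hx
    change (1:ℤ) ≤ ((σ k : ℕ) : ℤ) + 1
    omega
  exact le_antisymm (listMin_le _ h1) (hge _ (listMin_mem hne))

lemma apply_minIdx {n : ℕ} {σ : Equiv.Perm (Fin n)} {L R : BTree}
    (hσ : ctreeL (xlist n σ) = .node L R) (k : Fin n) (hk : (k : ℕ) = L.size) :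
    (σ k : ℕ) = 0 := by
  have hn := sizes_eq hσ
  have hne : xlist n σ ≠ [] := by
    intro h; rw [← List.length_eq_zero_iff, xlist_length] at h; omega
  have h := get_minIdx hne
  rw [listMin_xlist (by omega) σ] at h
  have hk' : (k : ℕ) < n := k.isLt
  have h3 : minIdx (xlist n σ) = (k : ℕ) := by rw [minIdx_xlist hσ, hk]
  have h4 : (xlist n σ).get ⟨(k : ℕ), by simp [hk']⟩ = 1 := by
    rw [← h]; congr 1; exact Fin.ext h3.symm
  have h5 := xlist_get σ hk'
  rw [Fin.eta] at h5
  rw [h5] at h4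
  omega

lemma ctree_take {n : ℕ} {σ : Equiv.Perm (Fin n)} {L R : BTree}
    (hσ : ctreeL (xlist n σ) = .node L R) :
    ctreeL ((xlist n σ).take L.size) = L ∧
    ctreeL ((xlist n σ).drop (L.size + 1)) = R := by
  have hn := sizes_eq hσ
  have hne : xlist n σ ≠ [] := by
    intro h; rw [← List.length_eq_zero_iff, xlist_length] at h; omega
  have h := ctreeL_ne hne
  rw [minIdx_xlist hσ, hσ] at h
  rw [BTree.node.injEq] at h
  exact ⟨h.1.symm, h.2.symm⟩

def leftSet (n a : ℕ) (σ : Equiv.Perm (Fin n)) : Finset (Fin n) :=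
  Finset.univ.filter (fun v => ((σ.symm v : Fin n) : ℕ) < a)

def rightSet (n a : ℕ) (σ : Equiv.Perm (Fin n)) : Finset (Fin n) :=
  Finset.univ.filter (fun v => a < ((σ.symm v : Fin n) : ℕ))

lemma leftSet_eq_map {n a : ℕ} (ha : a < n) (σ : Equiv.Perm (Fin n)) :
    leftSet n a σ = Finset.map σ.toEmbedding (Finset.Iio ⟨a, ha⟩) := by
  ext v
  simp only [leftSet, Finset.mem_filter, Finset.mem_univ, true_and, Finset.mem_map,
    Equiv.coe_toEmbedding, Finset.mem_Iio]
  constructor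
  · intro hv
    exact ⟨σ.symm v, by rwa [Fin.lt_def], by simp⟩
  · rintro ⟨k, hk, rfl⟩
    rw [Fin.lt_def] at hk
    simpa using hk

lemma rightSet_eq_map {n a : ℕ} (ha : a < n) (σ : Equiv.Perm (Fin n)) :
    rightSet n a σ = Finset.map σ.toEmbedding (Finset.Ioi ⟨a, ha⟩) := by
  ext v
  simp only [rightSet, Finset.mem_filter, Finset.mem_univ, true_and, Finset.mem_map,
    Equiv.coe_toEmbedding, Finset.mem_Ioi]
  constructor
  · intro hv
    exact ⟨σ.symm v, by rwa [Fin.lt_def], by simp⟩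
  · rintro ⟨k, hk, rfl⟩
    rw [Fin.lt_def] at hk
    simpa using hk

lemma card_leftSet {n a : ℕ} (ha : a < n) (σ : Equiv.Perm (Fin n)) :
    (leftSet n a σ).card = a := by
  rw [leftSet_eq_map ha, Finset.card_map, Fin.card_Iio]

lemma card_rightSet {n a : ℕ} (ha : a < n) (σ : Equiv.Perm (Fin n)) :
    (rightSet n a σ).card = n - 1 - a := by
  rw [rightSet_eq_map ha, Finset.card_map, Fin.card_Ioi]

@[simp] lemma mem_leftSet_iff {n a : ℕ} {σ : Equiv.Perm (Fin n)} {v : Fin n} :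
    v ∈ leftSet n a σ ↔ ((σ.symm v : Fin n) : ℕ) < a := by
  simp [leftSet]

@[simp] lemma mem_rightSet_iff {n a : ℕ} {σ : Equiv.Perm (Fin n)} {v : Fin n} :
    v ∈ rightSet n a σ ↔ a < ((σ.symm v : Fin n) : ℕ) := by
  simp [rightSet]

noncomputable def leftIso {n a : ℕ} (ha : a < n) (σ : Equiv.Perm (Fin n)) :
    Fin a ≃o {x : Fin n // x ∈ leftSet n a σ} :=
  (leftSet n a σ).orderIsoOfFin (card_leftSet ha σ)

noncomputable def rightIso {n a b : ℕ} (hn : n = a + b + 1) (σ : Equiv.Perm (Fin n)) :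
    Fin b ≃o {x : Fin n // x ∈ rightSet n a σ} :=
  (rightSet n a σ).orderIsoOfFin (by rw [card_rightSet (by omega) σ]; omega)

lemma sigma_mem_leftSet {n a : ℕ} (ha : a < n) (σ : Equiv.Perm (Fin n)) (k : Fin a) :
    σ ⟨(k : ℕ), lt_trans k.isLt ha⟩ ∈ leftSet n a σ := by
  simp only [mem_leftSet_iff, Equiv.symm_apply_apply]
  exact k.isLt

lemma sigma_mem_rightSet {n a b : ℕ} (hn : n = a + b + 1) (σ : Equiv.Perm (Fin n)) (k : Fin b) :
    σ ⟨a + 1 + (k : ℕ), by omega⟩ ∈ rightSet n a σ := by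
  simp only [mem_rightSet_iff, Equiv.symm_apply_apply]
  omega

noncomputable def leftPermFun {n a : ℕ} (ha : a < n) (σ : Equiv.Perm (Fin n)) :
    Fin a → Fin a :=
  fun k => (leftIso ha σ).symm ⟨σ ⟨(k : ℕ), lt_trans k.isLt ha⟩, sigma_mem_leftSet ha σ k⟩

noncomputable def rightPermFun {n a b : ℕ} (hn : n = a + b + 1) (σ : Equiv.Perm (Fin n)) :
    Fin b → Fin b :=
  fun k => (rightIso hn σ).symm ⟨σ ⟨a + 1 + (k : ℕ), by omega⟩, sigma_mem_rightSet hn σ k⟩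

lemma leftPermFun_inj {n a : ℕ} (ha : a < n) (σ : Equiv.Perm (Fin n)) :
    Function.Injective (leftPermFun ha σ) := by
  intro k k' h
  simp only [leftPermFun] at h
  have h2 := congrArg (fun z => ((leftIso ha σ z : {x : Fin n // x ∈ leftSet n a σ}) : Fin n)) h
  simp only [OrderIso.apply_symm_apply] at h2
  have := σ.injective h2
  simp only [Fin.mk.injEq] at this
  exact Fin.ext this

lemma rightPermFun_inj {n a b : ℕ} (hn : n = a + b + 1) (σ : Equiv.Perm (Fin n)) :
    Function.Injective (rightPermFun hn σ) := by
  intro k k' h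
  simp only [rightPermFun] at h
  have h2 := congrArg (fun z => ((rightIso hn σ z : {x : Fin n // x ∈ rightSet n a σ}) : Fin n)) h
  simp only [OrderIso.apply_symm_apply] at h2
  have := σ.injective h2
  simp only [Fin.mk.injEq] at this
  exact Fin.ext (by omega)

noncomputable def leftPerm {n a : ℕ} (ha : a < n) (σ : Equiv.Perm (Fin n)) :
    Equiv.Perm (Fin a) :=
  Equiv.ofBijective _ (Finite.injective_iff_bijective.mp (leftPermFun_inj ha σ))

noncomputable def rightPerm {n a b : ℕ} (hn : n = a + b + 1) (σ : Equiv.Perm (Fin n)) :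
    Equiv.Perm (Fin b) :=
  Equiv.ofBijective _ (Finite.injective_iff_bijective.mp (rightPermFun_inj hn σ))

lemma leftPerm_lt_iff {n a : ℕ} (ha : a < n) (σ : Equiv.Perm (Fin n)) (k k' : Fin a) :
    leftPerm ha σ k < leftPerm ha σ k' ↔
      (σ ⟨(k : ℕ), lt_trans k.isLt ha⟩ : ℕ) < (σ ⟨(k' : ℕ), lt_trans k'.isLt ha⟩ : ℕ) := by
  show leftPermFun ha σ k < leftPermFun ha σ k' ↔ _
  rw [leftPermFun, leftPermFun, ← (leftIso ha σ).symm.lt_iff_lt.symm]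
  rw [Subtype.mk_lt_mk, Fin.lt_def]

lemma rightPerm_lt_iff {n a b : ℕ} (hn : n = a + b + 1) (σ : Equiv.Perm (Fin n)) (k k' : Fin b) :
    rightPerm hn σ k < rightPerm hn σ k' ↔
      (σ ⟨a + 1 + (k : ℕ), by omega⟩ : ℕ) < (σ ⟨a + 1 + (k' : ℕ), by omega⟩ : ℕ) := by
  show rightPermFun hn σ k < rightPermFun hn σ k' ↔ _
  rw [rightPermFun, rightPermFun, ← (rightIso hn σ).symm.lt_iff_lt.symm]
  rw [Subtype.mk_lt_mk, Fin.lt_def]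

lemma ctree_leftPerm {n : ℕ} {σ : Equiv.Perm (Fin n)} {L R : BTree}
    (hσ : ctreeL (xlist n σ) = .node L R) (ha : L.size < n) :
    ctreeL (xlist L.size (leftPerm ha σ)) = L := by
  have hlen : (xlist L.size (leftPerm ha σ)).length = ((xlist n σ).take L.size).length := by
    simp only [xlist_length, List.length_take]
    omega
  refine Eq.trans (ctreeL_congr _ _ hlen ?_) (ctree_take hσ).1
  intro i j h1 h2
  have h1' : i < L.size := by simpa using h1
  have h2' : j < L.size := by simpa using h2
  have htake : ∀ (m : ℕ) (hm : m < L.size) (hm2 : m < ((xlist n σ).take L.size).length),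
      ((xlist n σ).take L.size).get ⟨m, hm2⟩ = ((σ ⟨m, by omega⟩ : ℕ) : ℤ) + 1 := by
    intro m hm hm2
    simp only [List.get_eq_getElem, List.getElem_take]
    have := xlist_get σ (show m < n by omega)
    simpa using this
  rw [xlist_get _ h1', xlist_get _ h2',
      htake i h1' (hlen ▸ h1), htake j h2' (hlen ▸ h2)]
  have hiff := leftPerm_lt_iff ha σ ⟨i, h1'⟩ ⟨j, h2'⟩
  rw [Fin.lt_def] at hiff
  simp only [Fin.eta] at hiff ⊢
  constructor
  · intro h
    have := hiff.mp (by omega)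
    omega
  · intro h
    have := hiff.mpr (by omega)
    omega

lemma ctree_rightPerm {n b : ℕ} {σ : Equiv.Perm (Fin n)} {L R : BTree}
    (hσ : ctreeL (xlist n σ) = .node L R) (hn : n = L.size + b + 1) (hb : R.size = b) :
    ctreeL (xlist b (rightPerm hn σ)) = R := by
  have hlen : (xlist b (rightPerm hn σ)).length =
      ((xlist n σ).drop (L.size + 1)).length := by
    simp only [xlist_length, List.length_drop]
    omega
  refine Eq.trans (ctreeL_congr _ _ hlen ?_) (ctree_take hσ).2
  intro i j h1 h2
  have h1' : i < b := by simpa using h1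
  have h2' : j < b := by simpa using h2
  have hdrop : ∀ (m : ℕ) (hm : m < b) (hm2 : m < ((xlist n σ).drop (L.size + 1)).length),
      ((xlist n σ).drop (L.size + 1)).get ⟨m, hm2⟩ =
        ((σ ⟨L.size + 1 + m, by omega⟩ : ℕ) : ℤ) + 1 := by
    intro m hm hm2
    simp only [List.get_eq_getElem, List.getElem_drop]
    have := xlist_get σ (show L.size + 1 + m < n by omega)
    simpa using this
  rw [xlist_get _ h1', xlist_get _ h2',
      hdrop i h1' (hlen ▸ h1), hdrop j h2' (hlen ▸ h2)]
  have hiff := rightPerm_lt_iff hn σ ⟨i, h1'⟩ ⟨j, h2'⟩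
  rw [Fin.lt_def] at hiff
  simp only [Fin.eta] at hiff ⊢
  constructor
  · intro h
    have := hiff.mp (by omega)
    omega
  · intro h
    have := hiff.mpr (by omega)
    omega

def Sfin (n : ℕ) (A : BTree) : Finset (Equiv.Perm (Fin n)) :=
  Finset.univ.filter (fun σ => ctreeL (xlist n σ) = A)

lemma mem_Sfin {n : ℕ} {A : BTree} {σ : Equiv.Perm (Fin n)} :
    σ ∈ Sfin n A ↔ ctreeL (xlist n σ) = A := by
  simp [Sfin]

lemma orderIsoOfFin_congr {n m : ℕ} {s t : Finset (Fin n)} (h : s = t)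
    (hs : s.card = m) (ht : t.card = m) (k : Fin m) :
    ((s.orderIsoOfFin hs k : {x // x ∈ s}) : Fin n) = ((t.orderIsoOfFin ht k : {x // x ∈ t}) : Fin n) := by
  subst h; rfl

lemma rightSet_eq {n a b : ℕ} (hn : n = a + b + 1) {L R : BTree} {σ : Equiv.Perm (Fin n)}
    (hσ : ctreeL (xlist n σ) = .node L R) (haL : L.size = a) :
    rightSet n a σ = ((leftSet n a σ)ᶜ).erase ⟨0, by omega⟩ := by
  have h0 : (σ ⟨a, by omega⟩ : ℕ) = 0 := apply_minIdx hσ _ (by simp [haL])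
  ext v
  simp only [mem_rightSet_iff, Finset.mem_erase, Finset.mem_compl, mem_leftSet_iff, not_lt]
  constructor
  · intro hv
    refine ⟨?_, by omega⟩
    intro hv0
    have : σ.symm v = ⟨a, by omega⟩ := by
      rw [Equiv.symm_apply_eq, hv0]
      exact (Fin.ext h0).symm
    rw [this] at hv
    simp at hv
  · rintro ⟨hv0, hva⟩
    rcases Nat.lt_or_ge a ((σ.symm v : Fin n) : ℕ) with h | h
    · exact h
    · have heq : ((σ.symm v : Fin n) : ℕ) = a := by omega
      exfalso
      apply hv0
      have : σ.symm v = ⟨a, by omega⟩ := Fin.ext heq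
      have := congrArg σ this
      simp only [Equiv.apply_symm_apply] at this
      rw [this]
      exact Fin.ext h0

lemma leftIso_apply {n a : ℕ} (ha : a < n) (σ : Equiv.Perm (Fin n)) (k : Fin a) :
    ((leftIso ha σ (leftPerm ha σ k)) : Fin n) = σ ⟨(k : ℕ), lt_trans k.isLt ha⟩ := by
  show ((leftIso ha σ (leftPermFun ha σ k)) : Fin n) = _
  rw [leftPermFun, OrderIso.apply_symm_apply]

lemma rightIso_apply {n a b : ℕ} (hn : n = a + b + 1) (σ : Equiv.Perm (Fin n)) (k : Fin b) :
    ((rightIso hn σ (rightPerm hn σ k)) : Fin n) = σ ⟨a + 1 + (k : ℕ), by omega⟩ := by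
  show ((rightIso hn σ (rightPermFun hn σ k)) : Fin n) = _
  rw [rightPermFun, OrderIso.apply_symm_apply]

lemma triple_inj {n a b : ℕ} (hn : n = a + b + 1) {L R : BTree} (haL : L.size = a) :
    Set.InjOn (fun σ : Equiv.Perm (Fin n) =>
      (leftSet n a σ, leftPerm (show a < n by omega) σ, rightPerm hn σ))
      (Sfin n (.node L R)) := by
  have ha : a < n := by omega
  intro σ hσ σ' hσ' heq
  rw [Finset.mem_coe, mem_Sfin] at hσ hσ'
  simp only [Prod.mk.injEq] at heq
  obtain ⟨hV, hLp, hRp⟩ := heq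
  have hW : rightSet n a σ = rightSet n a σ' := by
    rw [rightSet_eq hn hσ haL, rightSet_eq hn hσ' haL, hV]
  apply Equiv.ext
  intro k
  rcases lt_trichotomy (k : ℕ) a with hk | hk | hk
  · set kk : Fin a := ⟨(k : ℕ), hk⟩ with hkk
    have e1 := leftIso_apply ha σ kk
    have e2 := leftIso_apply ha σ' kk
    have hLpk : leftPerm ha σ kk = leftPerm ha σ' kk := by rw [hLp]
    have hcongr : ((leftIso ha σ (leftPerm ha σ kk)) : Fin n) =
        ((leftIso ha σ' (leftPerm ha σ kk)) : Fin n) :=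
      orderIsoOfFin_congr hV _ _ _
    rw [e1, hLpk, e2] at hcongr
    have hfin : (⟨(kk : ℕ), lt_trans kk.isLt ha⟩ : Fin n) = k := Fin.eta k _
    rwa [hfin] at hcongr
  · have h1 : (σ k : ℕ) = 0 := apply_minIdx hσ k (by omega)
    have h2 : (σ' k : ℕ) = 0 := apply_minIdx hσ' k (by omega)
    exact Fin.ext (by omega)
  · set kk : Fin b := ⟨(k : ℕ) - a - 1, by omega⟩ with hkk
    have e1 := rightIso_apply hn σ kk
    have e2 := rightIso_apply hn σ' kk
    have hRpk : rightPerm hn σ kk = rightPerm hn σ' kk := by rw [hRp]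
    have hcongr : ((rightIso hn σ (rightPerm hn σ kk)) : Fin n) =
        ((rightIso hn σ' (rightPerm hn σ kk)) : Fin n) :=
      orderIsoOfFin_congr hW _ _ _
    rw [e1, hRpk, e2] at hcongr
    have hfin : (⟨a + 1 + (kk : ℕ), by omega⟩ : Fin n) = k := Fin.ext (by simp [hkk]; omega)
    rwa [hfin] at hcongr

lemma key_count {n a b : ℕ} (hn : n = a + b + 1) {L R : BTree}
    (haL : L.size = a) (hbR : R.size = b) :
    (Sfin n (.node L R)).card ≤ (n - 1).choose a * ((Sfin a L).card * (Sfin b R).card) := by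
  subst haL
  subst hbR
  have ha : L.size < n := by omega
  classical
  refine le_trans (Finset.card_le_card_of_injOn
    (t := (Finset.univ.erase (⟨0, by omega⟩ : Fin n)).powersetCard L.size ×ˢ
      (Sfin L.size L ×ˢ Sfin R.size R))
    _ ?_ (triple_inj hn rfl)) (le_of_eq ?_)
  case refine_2 =>
    rw [Finset.card_product, Finset.card_product, Finset.card_powersetCard,
      Finset.card_erase_of_mem (Finset.mem_univ _), Finset.card_univ, Fintype.card_fin]
  · intro σ hσ
    rw [Finset.mem_coe, mem_Sfin] at hσ
    rw [Finset.mem_coe, Finset.mem_product, Finset.mem_product]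
    refine ⟨?_, ?_, ?_⟩
    · rw [Finset.mem_powersetCard]
      refine ⟨?_, by rw [card_leftSet ha]⟩
      intro v hv
      rw [mem_leftSet_iff] at hv
      rw [Finset.mem_erase]
      refine ⟨?_, Finset.mem_univ _⟩
      intro hv0
      have h0 : (σ ⟨L.size, by omega⟩ : ℕ) = 0 := apply_minIdx hσ _ (by simp)
      have : σ.symm v = ⟨L.size, by omega⟩ := by
        rw [Equiv.symm_apply_eq, hv0]
        exact (Fin.ext h0).symm
      rw [this] at hv
      simp at hv
    · rw [mem_Sfin]
      exact ctree_leftPerm hσ ha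
    · rw [mem_Sfin]
      exact ctree_rightPerm hσ (by omega) rfl


lemma count_hook : ∀ A : BTree, (Sfin A.size A).card * hookProd A ≤ (A.size).factorial := by
  intro A
  induction A with
  | nil =>
    have h1 : (Sfin 0 .nil).card ≤ 1 := by
      refine le_trans (Finset.card_le_univ _) ?_
      simp [Finset.card_univ]
    simpa [hookProd, BTree.size] using h1
  | node L R ihL ihR =>
    set a := L.size
    set b := R.size
    have hsz : (BTree.node L R).size = a + b + 1 := rfl
    rw [hsz]
    have hkey := key_count (n := a + b + 1) rfl (L := L) (R := R) rfl rfl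
    have h1 : (Sfin (a + b + 1) (.node L R)).card * hookProd (.node L R) ≤
        ((a + b).choose a * ((Sfin a L).card * (Sfin b R).card)) *
          ((a + b + 1) * hookProd L * hookProd R) := by
      apply Nat.mul_le_mul _ le_rfl
      simpa using hkey
    refine le_trans h1 ?_
    have h2 : ((a + b).choose a * ((Sfin a L).card * (Sfin b R).card)) *
        ((a + b + 1) * hookProd L * hookProd R) =
        (a + b + 1) * ((a + b).choose a *
          (((Sfin a L).card * hookProd L) * ((Sfin b R).card * hookProd R))) := by
      ring
    rw [h2]
    have h3 : (a + b).choose a *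
        (((Sfin a L).card * hookProd L) * ((Sfin b R).card * hookProd R)) ≤
        (a + b).choose a * (a.factorial * b.factorial) :=
      Nat.mul_le_mul le_rfl (Nat.mul_le_mul ihL ihR)
    refine le_trans (Nat.mul_le_mul le_rfl h3) ?_
    have h4 : (a + b).choose a * (a.factorial * b.factorial) = (a + b).factorial := by
      have := Nat.choose_mul_factorial_mul_factorial (show a ≤ a + b by omega)
      simp only [Nat.add_sub_cancel_left] at this
      rw [← this]
      ring
    rw [h4, Nat.factorial_succ]

lemma hookProd_pos (A : BTree) : 0 < hookProd A := by
  induction A with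
  | nil => norm_num [hookProd]
  | node L R ihL ihR =>
    have : 0 < (BTree.node L R).size := by simp [BTree.size]
    exact Nat.mul_pos (Nat.mul_pos this ihL) ihR

lemma size_le_hookProd (A : BTree) : A.size ≤ hookProd A := by
  induction A with
  | nil => norm_num [hookProd, BTree.size]
  | node L R ihL ihR =>
    calc (BTree.node L R).size = (BTree.node L R).size * 1 * 1 := by ring
    _ ≤ hookProd (.node L R) :=
      Nat.mul_le_mul (Nat.mul_le_mul le_rfl (hookProd_pos L)) (hookProd_pos R)

lemma size_cast_int (L R : BTree) :
    ((BTree.node L R).size : ℤ) = (L.size : ℤ) + R.size + 1 := by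
  show ((L.size + R.size + 1 : ℕ) : ℤ) = _
  push_cast
  ring

lemma hook_cast_int (L R : BTree) :
    (hookProd (BTree.node L R) : ℤ) =
      ((L.size : ℤ) + R.size + 1) * hookProd L * hookProd R := by
  show ((_ * _ * _ : ℕ) : ℤ) = _
  push_cast
  rw [size_cast_int]

lemma hook_quad (A : BTree) : (A.size : ℤ) * ((A.size : ℤ) - 2) ≤ 2 * hookProd A := by
  cases A with
  | nil => norm_num [hookProd, BTree.size]
  | node L R =>
    have hl1 : (1 : ℤ) ≤ hookProd L := by exact_mod_cast hookProd_pos L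
    have hr1 : (1 : ℤ) ≤ hookProd R := by exact_mod_cast hookProd_pos R
    have hl2 : (L.size : ℤ) ≤ hookProd L := by exact_mod_cast size_le_hookProd L
    have hr2 : (R.size : ℤ) ≤ hookProd R := by exact_mod_cast size_le_hookProd R
    rw [size_cast_int, hook_cast_int]
    set α := (L.size : ℤ) with hαd
    set β := (R.size : ℤ) with hβd
    set x := (hookProd L : ℤ)
    set y := (hookProd R : ℤ)
    have hα : 0 ≤ α := Int.natCast_nonneg _
    have hβ : 0 ≤ β := Int.natCast_nonneg _
    have key : α + β - 1 ≤ 2 * x * y := by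
      rcases le_or_gt α 0 with h0 | h0 <;> rcases le_or_gt β 0 with h1 | h1
      · nlinarith
      · nlinarith [mul_le_mul hl1 hr2 hβ (by linarith)]
      · nlinarith [mul_le_mul hl2 hr1 (by norm_num) (by linarith)]
      · nlinarith [mul_le_mul hl2 hr2 hβ (by linarith)]
    nlinarith [mul_le_mul_of_nonneg_left key (show (0:ℤ) ≤ α + β + 1 by linarith)]

lemma hook_cubic (A : BTree) :
    (A.size : ℤ) * ((A.size : ℤ) - 2) * ((A.size : ℤ) - 3) ≤ 4 * hookProd A := by
  cases A with
  | nil => norm_num [hookProd, BTree.size]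
  | node L R =>
    have hl1 : (1 : ℤ) ≤ hookProd L := by exact_mod_cast hookProd_pos L
    have hr1 : (1 : ℤ) ≤ hookProd R := by exact_mod_cast hookProd_pos R
    have hl2 : (L.size : ℤ) ≤ hookProd L := by exact_mod_cast size_le_hookProd L
    have hr2 : (R.size : ℤ) ≤ hookProd R := by exact_mod_cast size_le_hookProd R
    have hl3 := hook_quad L
    have hr3 := hook_quad R
    rw [size_cast_int, hook_cast_int]
    set α := (L.size : ℤ)
    set β := (R.size : ℤ)
    set x := (hookProd L : ℤ)
    set y := (hookProd R : ℤ)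
    have hα : 0 ≤ α := Int.natCast_nonneg _
    have hβ : 0 ≤ β := Int.natCast_nonneg _
    have key : (α + β - 1) * (α + β - 2) ≤ 4 * x * y := by
      rcases le_or_gt α 0 with h0 | h0 <;> rcases le_or_gt β 0 with h1 | h1
      · nlinarith
      · rcases le_or_gt β 1 with h2 | h2
        · nlinarith
        · nlinarith [mul_le_mul hl1 hr3 (by nlinarith) (by linarith), mul_le_mul hl1 hr2 hβ (by linarith)]
      · rcases le_or_gt α 1 with h2 | h2
        · nlinarith
        · nlinarith [mul_le_mul hl3 hr1 (by norm_num) (by nlinarith), mul_le_mul hl2 hr1 (by norm_num) (by linarith)]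
      · have h0' : 1 ≤ α := h0
        have h1' : 1 ≤ β := h1
        rcases le_or_gt α 3 with hA | hA <;> rcases le_or_gt β 3 with hB | hB
        · interval_cases α <;> interval_cases β <;> nlinarith
        · interval_cases α <;> nlinarith
        · interval_cases β <;> nlinarith
        · nlinarith [mul_le_mul hl3 hr3 (by nlinarith) (by linarith),
            mul_pos (by linarith : (0:ℤ) < x) (by linarith : (0:ℤ) < y),
            sq_nonneg (α - β), sq_nonneg (α + β)]
    nlinarith [mul_le_mul_of_nonneg_left key (show (0:ℤ) ≤ α + β + 1 by linarith)]

lemma permCount_eq_card (n : ℕ) (A : BTree) : permCount n A = (Sfin n A).card := by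
  rw [permCount]
  have h : {σ : Equiv.Perm (Fin n) |
      ctreeL (List.ofFn (fun k : Fin n => ((σ k : ℕ) : ℤ) + 1)) = A} = ↑(Sfin n A) := by
    ext σ
    simp only [Set.mem_setOf_eq, Finset.mem_coe, mem_Sfin]
    rfl
  rw [h, Set.ncard_coe_finset]

theorem stmt14 (j : ℕ) (hj : 4 ≤ j) (A : BTree) (hA : A.size = j) :
    (permCount j A : ℝ) / (Nat.factorial j : ℝ) ≤
      4 / ((j : ℝ) * ((j : ℝ) - 2) * ((j : ℝ) - 3)) := by
  subst hA
  have hph : permCount A.size A * hookProd A ≤ (A.size).factorial := by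
    rw [permCount_eq_card]
    exact count_hook A
  have hcub := hook_cubic A
  have hhpos : 0 < hookProd A := hookProd_pos A
  set n := A.size with hn
  have hjR : (4 : ℝ) ≤ (n : ℝ) := by exact_mod_cast hj
  have hDpos : 0 < (n : ℝ) * ((n : ℝ) - 2) * ((n : ℝ) - 3) := by
    apply mul_pos (mul_pos (by linarith) (by linarith))
    linarith
  have hfacpos : (0 : ℝ) < (Nat.factorial n : ℝ) := by
    exact_mod_cast Nat.factorial_pos n
  rw [div_le_div_iff₀ hfacpos hDpos]
  have hcubR : (n : ℝ) * ((n : ℝ) - 2) * ((n : ℝ) - 3) ≤ 4 * (hookProd A : ℝ) := by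
    exact_mod_cast hcub
  have hphR : (permCount n A : ℝ) * (hookProd A : ℝ) ≤ (Nat.factorial n : ℝ) := by
    exact_mod_cast hph
  have hpnn : (0 : ℝ) ≤ (permCount n A : ℝ) := Nat.cast_nonneg _
  calc (permCount n A : ℝ) * ((n : ℝ) * ((n : ℝ) - 2) * ((n : ℝ) - 3))
      ≤ (permCount n A : ℝ) * (4 * (hookProd A : ℝ)) :=
        mul_le_mul_of_nonneg_left hcubR hpnn
    _ = 4 * ((permCount n A : ℝ) * (hookProd A : ℝ)) := by ring
    _ ≤ 4 * (Nat.factorial n : ℝ) := by linarith
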